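/- Let r ≥ 0 and let A = (a_{ij})_{0≤i,j≤r} be the (r+1)×(r+1) matrix with a_{ij} = 1/(3r+1-3i-j)! when 3r+1-3i-j ≥ 0 and a_{ij} = 0 otherwise. Then A is invertible. -/

import Mathlib

/-- The (r+1)×(r+1) matrix with entries 1/(3r+1-3i-j)! (when 3r+1-3i-j ≥ 0,
and 0 otherwise) is invertible. -/
theorem stmt2 (r : ℕ) (A : Matrix (Fin (r + 1)) (Fin (r + 1)) ℚ)
    (hA : ∀ i j : Fin (r + 1), A i j =
      if 3 * (i : ℕ) + (j : ℕ) ≤ 3 * r + 1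
        then ((3 * r + 1 - 3 * (i : ℕ) - (j : ℕ)).factorial : ℚ)⁻¹
        else 0) :
    A.det ≠ 0 := by
  set m : Fin (r + 1) → ℕ := fun i => 3 * (r - (i : ℕ)) + 1 with hm
  have hmval : ∀ i : Fin (r + 1), m i = 3 * r + 1 - 3 * (i : ℕ) := by
    intro i
    have hi : (i : ℕ) ≤ r := Nat.lt_succ_iff.mp i.isLt
    simp only [hm]
    omega
  -- A = diagonal * D
  set D : Matrix (Fin (r + 1)) (Fin (r + 1)) ℚ :=
    Matrix.of fun i j => (descPochhammer ℚ (j : ℕ)).eval ((m i : ℚ)) with hD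
  have hAeq : A = Matrix.diagonal (fun i => ((m i).factorial : ℚ)⁻¹) * D := by
    ext i j
    rw [Matrix.diagonal_mul, hA]
    simp only [hD, Matrix.of_apply, descPochhammer_eval_eq_descFactorial]
    by_cases h : 3 * (i : ℕ) + (j : ℕ) ≤ 3 * r + 1
    · rw [if_pos h]
      have hjm : (j : ℕ) ≤ m i := by rw [hmval]; omega
      have hfac : ((m i) - (j : ℕ)).factorial * (m i).descFactorial (j : ℕ)
          = (m i).factorial := Nat.factorial_mul_descFactorial hjm
      have h2 : 3 * r + 1 - 3 * (i : ℕ) - (j : ℕ) = m i - (j : ℕ) := by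
        rw [hmval]
      rw [h2]
      have hne : (((m i) - (j : ℕ)).factorial : ℚ) ≠ 0 := by
        exact_mod_cast Nat.factorial_ne_zero _
      have hne2 : (((m i)).factorial : ℚ) ≠ 0 := by
        exact_mod_cast Nat.factorial_ne_zero _
      field_simp
      rw [mul_comm]
      exact_mod_cast hfac.symm.trans (mul_comm _ _)
    · rw [if_neg h]
      have : m i < (j : ℕ) := by rw [hmval]; omega
      rw [Nat.descFactorial_eq_zero_iff_lt.mpr this]
      simp
  rw [hAeq, Matrix.det_mul, Matrix.det_diagonal]
  have hDdet : D.det = (Matrix.vandermonde fun i => ((m i : ℚ))).det := by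
    rw [Matrix.det_eval_matrixOfPolynomials_eq_det_vandermonde
      (fun i => ((m i : ℚ))) (fun j => descPochhammer ℚ (j : ℕ))
      (fun j => descPochhammer_natDegree ℚ (j : ℕ))
      (fun j => monic_descPochhammer ℚ (j : ℕ))]
  rw [hDdet]
  apply mul_ne_zero
  · apply Finset.prod_ne_zero_iff.mpr
    intro i _
    exact inv_ne_zero (by exact_mod_cast Nat.factorial_ne_zero _)
  · rw [Matrix.det_vandermonde_ne_zero_iff]
    intro i j hij
    have : m i = m j := by
      have := hij
      simp only at this
      exact_mod_cast this
    have hi : (i : ℕ) ≤ r := Nat.lt_succ_iff.mp i.isLt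
    have hj : (j : ℕ) ≤ r := Nat.lt_succ_iff.mp j.isLt
    have : (i : ℕ) = (j : ℕ) := by simp only [hm] at this; omega
    exact Fin.ext this
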